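/- Let ℓ ≥ 1 and let G be the graph obtained from K_{ℓ+2} by attaching one pendant leaf to ℓ of its vertices, and let v be one of the two clique vertices without an attached leaf. Then γ_g'(G) = γ_g'(G−v) = ℓ + 1. -/
import Mathlib


open Classical

noncomputable section

namespace DomGame

variable {V : Type*} [Fintype V]

/-- Closed neighborhood of `v` as a `Finset`. -/
noncomputable def N (G : SimpleGraph V) (v : V) : Finset V :=
  Finset.univ.filter (fun u => G.Adj v u ∨ u = v)

/-- Legal moves given the set `S` of already dominated vertices. -/
noncomputable def moves (G : SimpleGraph V) (S : Finset V) : Finset V :=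
  Finset.univ.filter (fun v => ¬ N G v ⊆ S)

lemma card_lt {G : SimpleGraph V} {S : Finset V} (v : V) (hv : v ∈ moves G S) :
    (Finset.univ \ (S ∪ N G v)).card < (Finset.univ \ S).card := by
  simp only [moves, Finset.mem_filter] at hv
  obtain ⟨u, hu, hus⟩ := Finset.not_subset.mp hv.2
  apply Finset.card_lt_card
  refine ⟨Finset.sdiff_subset_sdiff (le_refl _) Finset.subset_union_left, ?_⟩
  intro hsub
  have := hsub (Finset.mem_sdiff.mpr ⟨Finset.mem_univ u, hus⟩)
  rw [Finset.mem_sdiff, Finset.mem_union] at this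
  exact this.2 (Or.inr hu)

mutual
/-- Number of moves with optimal play when it is Dominator's turn and
`S` is the set of already dominated vertices. -/
noncomputable def gameD (G : SimpleGraph V) (S : Finset V) : ℕ :=
  if h : (moves G S).Nonempty then
    1 + (moves G S).attach.inf' (by simpa using h)
      (fun v => gameS G (S ∪ N G v.1))
  else 0
termination_by (Finset.univ \ S).card
decreasing_by exact card_lt v.1 v.2

/-- Number of moves with optimal play when it is Staller's turn. -/
noncomputable def gameS (G : SimpleGraph V) (S : Finset V) : ℕ :=
  if h : (moves G S).Nonempty then
    1 + (moves G S).attach.sup' (by simpa using h)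
      (fun v => gameD G (S ∪ N G v.1))
  else 0
termination_by (Finset.univ \ S).card
decreasing_by exact card_lt v.1 v.2
end

/-- The (Dominator-start) game domination number. -/
noncomputable def gammaG (G : SimpleGraph V) : ℕ := gameD G ∅

/-- The Staller-start game domination number. -/
noncomputable def gammaG' (G : SimpleGraph V) : ℕ := gameS G ∅

end DomGame

namespace DomGame

variable {V : Type*} [Fintype V]

open Finset

lemma self_mem_N (G : SimpleGraph V) (v : V) : v ∈ N G v := by simp [N]

lemma mem_N {G : SimpleGraph V} {u v : V} : u ∈ N G v ↔ G.Adj v u ∨ u = v := by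
  simp [N]

lemma mem_moves {G : SimpleGraph V} {S : Finset V} {v : V} :
    v ∈ moves G S ↔ ¬ N G v ⊆ S := by simp [moves]

lemma sdiff_card_aux {S T : Finset V} (hST : S ⊆ T) :
    (univ \ T).card = (univ \ S).card - (T \ S).card := by
  have h1 : univ \ T = (univ \ S) \ (T \ S) := by
    ext x
    simp only [mem_sdiff, mem_univ, true_and]
    constructor
    · intro hx
      exact ⟨fun hxS => hx (hST hxS), fun h => hx h.1⟩
    · intro ⟨hx1, hx2⟩ hxT
      exact hx2 ⟨hxT, hx1⟩
  rw [h1, card_sdiff_of_subset]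
  intro x hx
  simp only [mem_sdiff] at hx ⊢
  exact ⟨mem_univ x, hx.2⟩

/-- In a "forced" position, where every legal move from every larger position
dominates exactly one new vertex, the game lasts exactly as many moves as
there are undominated vertices, for either player to move. -/
lemma forced (G : SimpleGraph V) :
    ∀ (n : ℕ) (S : Finset V), (univ \ S).card = n →
    (∀ S', S ⊆ S' → ∀ v ∈ moves G S', ((S' ∪ N G v) \ S').card = 1) →
    gameD G S = n ∧ gameS G S = n := by
  intro n
  induction n using Nat.strong_induction_on with
  | _ n ih =>
    intro S hn H
    by_cases h : (moves G S).Nonempty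
    · obtain ⟨v0, hv0⟩ := h
      have hne : (moves G S).Nonempty := ⟨v0, hv0⟩
      -- n ≥ 1
      have hn1 : 1 ≤ n := by
        obtain ⟨u, hu, hus⟩ := Finset.not_subset.mp (mem_moves.mp hv0)
        have : u ∈ univ \ S := mem_sdiff.mpr ⟨mem_univ u, hus⟩
        have := card_pos.mpr ⟨u, this⟩
        omega
      -- each move leads to a position of value n - 1
      have key : ∀ v ∈ moves G S,
          gameD G (S ∪ N G v) = n - 1 ∧ gameS G (S ∪ N G v) = n - 1 := by
        intro v hv
        have h1 := H S (subset_refl S) v hv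
        have hsub : S ⊆ S ∪ N G v := subset_union_left
        have hcard : (univ \ (S ∪ N G v)).card = n - 1 := by
          rw [sdiff_card_aux hsub, h1, hn]
        exact ih (n - 1) (by omega) _ hcard
          (fun S' hS' v' hv' => H S' (hsub.trans hS') v' hv')
      constructor
      · rw [gameD, dif_pos hne]
        have heq : (moves G S).attach.inf' (by simpa using hne)
            (fun v => gameS G (S ∪ N G v.1)) = n - 1 := by
          apply le_antisymm
          · exact le_trans (Finset.inf'_le _ (mem_attach _ ⟨v0, hv0⟩))
              (le_of_eq (key v0 hv0).2)
          · exact Finset.le_inf' _ _ (fun x _ => le_of_eq (key x.1 x.2).2.symm)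
        rw [heq]; omega
      · rw [gameS, dif_pos hne]
        have heq : (moves G S).attach.sup' (by simpa using hne)
            (fun v => gameD G (S ∪ N G v.1)) = n - 1 := by
          apply le_antisymm
          · exact Finset.sup'_le _ _ (fun x _ => le_of_eq (key x.1 x.2).1)
          · exact le_trans (le_of_eq (key v0 hv0).1.symm)
              (Finset.le_sup' (fun v => gameD G (S ∪ N G v.1)) (mem_attach _ ⟨v0, hv0⟩))
        rw [heq]; omega
    · have hSuniv : univ \ S = ∅ := by
        by_contra hne
        obtain ⟨u, hu⟩ := nonempty_of_ne_empty hne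
        have hus : u ∉ S := (mem_sdiff.mp hu).2
        exact h ⟨u, mem_moves.mpr (Finset.not_subset.mpr ⟨u, self_mem_N G u, hus⟩)⟩
      have hn0 : n = 0 := by rw [← hn, hSuniv]; simp
      rw [gameD, dif_neg h, gameS, dif_neg h]
      omega

/-- Abstract computation of the Staller-start game domination number for a graph
consisting of a dominating "clique part" `C` (in which some vertex `v0` has
closed neighborhood exactly `C`), where every closed neighborhood contains at
most one vertex outside `C`. -/
lemma gammaG'_formula (G : SimpleGraph V) (C : Finset V) (v0 : V)
    (hv0 : N G v0 = C)
    (H1 : ∀ v : V, ∀ a ∈ N G v, ∀ b ∈ N G v, a ∉ C → b ∉ C → a = b)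
    (H5 : ∀ u ∈ C, C ⊆ N G u)
    (hk : 1 ≤ Fintype.card V - C.card) :
    gammaG' G = (Fintype.card V - C.card) + 1 := by
  have hkcard : ((univ : Finset V) \ C).card = Fintype.card V - C.card := by
    rw [← Finset.compl_eq_univ_sdiff, Finset.card_compl]
  rw [← hkcard] at hk ⊢
  set k := ((univ : Finset V) \ C).card with hkdef
  -- the forced-lemma hypothesis holds whenever the position contains C
  have hforced : ∀ S : Finset V, C ⊆ S →
      (∀ S', S ⊆ S' → ∀ v ∈ moves G S', ((S' ∪ N G v) \ S').card = 1) := by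
    intro S hCS S' hSS' v hv
    have hmemNC : ∀ x ∈ (S' ∪ N G v) \ S', x ∈ N G v ∧ x ∉ C := by
      intro x hx
      rw [mem_sdiff, mem_union] at hx
      rcases hx with ⟨hx1 | hx1, hx2⟩
      · exact absurd hx1 hx2
      · exact ⟨hx1, fun hxC => hx2 (hSS' (hCS hxC))⟩
    have hle : ((S' ∪ N G v) \ S').card ≤ 1 := by
      rw [Finset.card_le_one]
      intro a ha b hb
      obtain ⟨ha1, ha2⟩ := hmemNC a ha
      obtain ⟨hb1, hb2⟩ := hmemNC b hb
      exact H1 v a ha1 b hb1 ha2 hb2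
    obtain ⟨u, hu, hus⟩ := Finset.not_subset.mp (mem_moves.mp hv)
    have hpos : 0 < ((S' ∪ N G v) \ S').card :=
      card_pos.mpr ⟨u, mem_sdiff.mpr ⟨mem_union_right _ hu, hus⟩⟩
    omega
  have hv0C : v0 ∈ C := hv0 ▸ self_mem_N G v0
  -- value of the game after any first move is at most k
  have hbound : ∀ u : V, u ∈ moves G (∅ : Finset V) → gameD G ((∅ : Finset V) ∪ N G u) ≤ k := by
    intro u _
    rw [empty_union]
    by_cases hc : C ⊆ N G u
    · have := (forced G (univ \ N G u).card (N G u) rfl (hforced _ hc)).1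
      rw [this]
      exact card_le_card (fun x hx => mem_sdiff.mpr
        ⟨mem_univ x, fun hxC => (mem_sdiff.mp hx).2 (hc hxC)⟩)
    · -- Dominator answers with v0
      have huC : u ∉ C := fun huC => hc (H5 u huC)
      have hv0mv : v0 ∈ moves G (N G u) := by
        rw [mem_moves, hv0]
        exact fun hsub => hc (fun x hx => by
          -- C ⊆ N G u would follow from C ⊆ N G u; here hsub : C ⊆ N G u
          exact hsub hx)
      have hne : (moves G (N G u)).Nonempty := ⟨v0, hv0mv⟩
      rw [gameD, dif_pos hne]
      have hCsub : C ⊆ N G u ∪ N G v0 := by rw [hv0]; exact subset_union_right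
      have hval := (forced G (univ \ (N G u ∪ N G v0)).card (N G u ∪ N G v0) rfl
        (hforced _ hCsub)).2
      have hcard : (univ \ (N G u ∪ N G v0)).card ≤ k - 1 := by
        have hsub : univ \ (N G u ∪ N G v0) ⊆ (univ \ C).erase u := by
          intro x hx
          rw [mem_sdiff, mem_union] at hx
          refine mem_erase.mpr ⟨?_, mem_sdiff.mpr ⟨mem_univ x, ?_⟩⟩
          · rintro rfl; exact hx.2 (Or.inl (self_mem_N G x))
          · intro hxC; exact hx.2 (Or.inr (by rw [hv0]; exact hxC))
        have := card_le_card hsub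
        rwa [card_erase_of_mem (mem_sdiff.mpr ⟨mem_univ u, huC⟩)] at this
      have hinf : (moves G (N G u)).attach.inf' (by simpa using hne)
          (fun v => gameS G (N G u ∪ N G v.1)) ≤ k - 1 := by
        refine le_trans (Finset.inf'_le _ (mem_attach _ ⟨v0, hv0mv⟩)) ?_
        rw [hval]; exact hcard
      omega
  -- the first move v0 achieves exactly k
  have hexact : gameD G ((∅ : Finset V) ∪ N G v0) = k := by
    rw [empty_union]
    have := (forced G (univ \ N G v0).card (N G v0) rfl
      (hforced _ (le_of_eq hv0.symm))).1
    rw [this, hv0]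
  have hv0mv : v0 ∈ moves G (∅ : Finset V) :=
    mem_moves.mpr (Finset.not_subset.mpr ⟨v0, self_mem_N G v0, notMem_empty v0⟩)
  have hne : (moves G (∅ : Finset V)).Nonempty := ⟨v0, hv0mv⟩
  rw [gammaG', gameS, dif_pos hne]
  have hsup : (moves G (∅ : Finset V)).attach.sup' (by simpa using hne)
      (fun v => gameD G ((∅ : Finset V) ∪ N G v.1)) = k := by
    apply le_antisymm
    · exact Finset.sup'_le _ _ (fun x _ => hbound x.1 x.2)
    · exact le_trans (le_of_eq hexact.symm)
        (Finset.le_sup' (fun v => gameD G ((∅ : Finset V) ∪ N G v.1)) (mem_attach _ ⟨v0, hv0mv⟩))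
  rw [hsup]; omega

end DomGame


open DomGame

/-- The graph obtained from `K_{ℓ+2}` (on the `inl` vertices) by attaching a
pendant leaf `inr i` to the clique vertex `inl (castLE i)`, for each
`i : Fin ℓ`; so the last two clique vertices have no leaf attached. -/
noncomputable def cliqueWithSomeLeaves (l : ℕ) : SimpleGraph (Fin (l + 2) ⊕ Fin l) :=
  SimpleGraph.fromRel (fun a b =>
    match a, b with
    | Sum.inl _, Sum.inl _ => True
    | Sum.inl i, Sum.inr j => i = Fin.castLE (by omega) j
    | _, _ => False)

section Concrete

open Finset DomGame

variable {l : ℕ}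

lemma cwsl_adj_inl_inl {i i' : Fin (l + 2)} :
    (cliqueWithSomeLeaves l).Adj (Sum.inl i) (Sum.inl i') ↔ i ≠ i' := by
  simp [cliqueWithSomeLeaves, SimpleGraph.fromRel_adj]

lemma cwsl_adj_inl_inr {i : Fin (l + 2)} {j : Fin l} :
    (cliqueWithSomeLeaves l).Adj (Sum.inl i) (Sum.inr j) ↔
      i = Fin.castLE (by omega) j := by
  simp [cliqueWithSomeLeaves, SimpleGraph.fromRel_adj]

lemma cwsl_adj_inr_inl {i : Fin (l + 2)} {j : Fin l} :
    (cliqueWithSomeLeaves l).Adj (Sum.inr j) (Sum.inl i) ↔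
      i = Fin.castLE (by omega) j := by
  simp [cliqueWithSomeLeaves, SimpleGraph.fromRel_adj]

lemma cwsl_adj_inr_inr {j j' : Fin l} :
    ¬ (cliqueWithSomeLeaves l).Adj (Sum.inr j) (Sum.inr j') := by
  simp [cliqueWithSomeLeaves, SimpleGraph.fromRel_adj]

end Concrete

section Concrete2

open Finset DomGame

lemma cwsl_part1 (l : ℕ) (hl : 1 ≤ l) :
    gammaG' (cliqueWithSomeLeaves l) = l + 1 := by
  classical
  set G := cliqueWithSomeLeaves l with hG
  set C : Finset (Fin (l+2) ⊕ Fin l) := univ.image Sum.inl with hC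
  have hmemC : ∀ x : Fin (l+2) ⊕ Fin l, x ∈ C ↔ ∃ i, x = Sum.inl i := by
    intro x; simp [hC, eq_comm]
  have hnotC : ∀ x : Fin (l+2) ⊕ Fin l, x ∉ C → ∃ j, x = Sum.inr j := by
    rintro (i | j) hx
    · exact absurd ((hmemC _).mpr ⟨i, rfl⟩) hx
    · exact ⟨j, rfl⟩
  have hlast : ∀ j : Fin l, Fin.last (l+1) ≠ Fin.castLE (by omega) j := by
    intro j h
    have := congrArg Fin.val h
    simp [Fin.val_last] at this
    omega
  have hv0 : N G (Sum.inl (Fin.last (l+1))) = C := by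
    ext x
    rcases x with i | j
    · simp only [mem_N, hmemC]
      constructor
      · intro _; exact ⟨i, rfl⟩
      · intro _
        by_cases h : Fin.last (l+1) = i
        · exact Or.inr (by rw [h])
        · exact Or.inl (cwsl_adj_inl_inl.mpr h)
    · simp only [mem_N, hmemC]
      constructor
      · rintro (h | h)
        · exact absurd (cwsl_adj_inl_inr.mp h) (hlast j)
        · exact absurd h (by simp)
      · rintro ⟨i, h⟩; exact absurd h (by simp)
  have H1 : ∀ v : Fin (l+2) ⊕ Fin l, ∀ a ∈ N G v, ∀ b ∈ N G v,
      a ∉ C → b ∉ C → a = b := by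
    intro v a ha b hb haC hbC
    obtain ⟨ja, rfl⟩ := hnotC a haC
    obtain ⟨jb, rfl⟩ := hnotC b hbC
    have ha' := mem_N.mp ha
    have hb' := mem_N.mp hb
    rcases v with i | j
    · rcases ha' with ha' | ha'
      · rcases hb' with hb' | hb'
        · have h1 := cwsl_adj_inl_inr.mp ha'
          have h2 := cwsl_adj_inl_inr.mp hb'
          have : ja = jb := by
            have := congrArg Fin.val (h1.symm.trans h2)
            exact Fin.ext (by simpa using this)
          rw [this]
        · exact absurd hb' (by simp)
      · exact absurd ha' (by simp)
    · rcases ha' with ha' | ha'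
      · exact absurd ha' (cwsl_adj_inr_inr)
      · rcases hb' with hb' | hb'
        · exact absurd hb' (cwsl_adj_inr_inr)
        · rw [ha', hb']
  have H5 : ∀ u ∈ C, C ⊆ N G u := by
    intro u hu
    obtain ⟨i, rfl⟩ := (hmemC u).mp hu
    intro x hx
    obtain ⟨k, rfl⟩ := (hmemC x).mp hx
    rw [mem_N]
    by_cases h : i = k
    · exact Or.inr (by rw [h])
    · exact Or.inl (cwsl_adj_inl_inl.mpr h)
  have hcardC : C.card = l + 2 := by
    rw [hC, Finset.card_image_of_injective _ Sum.inl_injective, card_univ, Fintype.card_fin]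
  have hcardV : Fintype.card (Fin (l+2) ⊕ Fin l) = 2 * l + 2 := by
    simp [Fintype.card_sum]; omega
  have := gammaG'_formula G C (Sum.inl (Fin.last (l+1))) hv0 H1 H5
    (by rw [hcardC, hcardV]; omega)
  rw [this, hcardC, hcardV]; omega

end Concrete2

section Concrete3

open Finset DomGame

lemma cwsl_part2 (l : ℕ) (hl : 1 ≤ l) :
    gammaG' ((cliqueWithSomeLeaves l).induce
      {(Sum.inl (Fin.last (l + 1)) : Fin (l + 2) ⊕ Fin l)}ᶜ) = l + 1 := by
  classical
  set s : Set (Fin (l+2) ⊕ Fin l) :=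
    {(Sum.inl (Fin.last (l + 1)) : Fin (l + 2) ⊕ Fin l)}ᶜ with hs
  set H := (cliqueWithSomeLeaves l).induce s with hH
  have hadj : ∀ a b : ↥s, H.Adj a b ↔ (cliqueWithSomeLeaves l).Adj a.1 b.1 :=
    fun a b => Iff.rfl
  have hmems : ∀ x : Fin (l+2) ⊕ Fin l,
      x ∈ s ↔ x ≠ Sum.inl (Fin.last (l+1)) := by
    intro x; simp [hs]
  -- the clique part
  set C : Finset ↥s :=
    univ.filter (fun x => ∃ i, (x : Fin (l+2) ⊕ Fin l) = Sum.inl i) with hC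
  have hmemC : ∀ x : ↥s, x ∈ C ↔ ∃ i, (x : Fin (l+2) ⊕ Fin l) = Sum.inl i := by
    intro x; simp [hC]
  have hnotC : ∀ x : ↥s, x ∉ C → ∃ j, (x : Fin (l+2) ⊕ Fin l) = Sum.inr j := by
    rintro ⟨i | j, hx⟩ h
    · exact absurd ((hmemC _).mpr ⟨i, rfl⟩) h
    · exact ⟨j, rfl⟩
  -- the leafless clique vertex inside the subgraph
  have hlmem : (Sum.inl (⟨l, by omega⟩ : Fin (l+2)) : Fin (l+2) ⊕ Fin l) ∈ s := by
    rw [hmems]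
    intro h
    have := congrArg Fin.val (Sum.inl_injective h)
    simp [Fin.val_last] at this
  set v0 : ↥s := ⟨Sum.inl ⟨l, by omega⟩, hlmem⟩ with hv0def
  have hlne : ∀ j : Fin l, (⟨l, by omega⟩ : Fin (l+2)) ≠ Fin.castLE (by omega) j := by
    intro j h
    have := congrArg Fin.val h
    simp at this
    omega
  have hv0 : N H v0 = C := by
    ext x
    obtain ⟨x, hx⟩ := x
    rcases x with i | j
    · simp only [mem_N, hmemC]
      constructor
      · intro _; exact ⟨i, rfl⟩
      · intro _
        by_cases h : (⟨l, by omega⟩ : Fin (l+2)) = i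
        · exact Or.inr (Subtype.ext (show Sum.inl i = Sum.inl (⟨l, by omega⟩ : Fin (l+2))
            from by rw [← h]))
        · exact Or.inl ((hadj _ _).mpr (cwsl_adj_inl_inl.mpr h))
    · simp only [mem_N, hmemC]
      constructor
      · rintro (h | h)
        · exact absurd (cwsl_adj_inl_inr.mp ((hadj _ _).mp h)) (hlne j)
        · exact absurd (congrArg Subtype.val h) (by simp [hv0def])
      · rintro ⟨i, h⟩; exact absurd h (by simp)
  have H1 : ∀ v : ↥s, ∀ a ∈ N H v, ∀ b ∈ N H v, a ∉ C → b ∉ C → a = b := by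
    intro v a ha b hb haC hbC
    obtain ⟨ja, hja⟩ := hnotC a haC
    obtain ⟨jb, hjb⟩ := hnotC b hbC
    have ha' := mem_N.mp ha
    have hb' := mem_N.mp hb
    obtain ⟨v, hv⟩ := v
    rcases v with i | j
    · rcases ha' with ha' | ha'
      · rcases hb' with hb' | hb'
        · have h1 := ((hadj _ _).mp ha')
          have h2 := ((hadj _ _).mp hb')
          rw [hja] at h1
          rw [hjb] at h2
          have h1 := cwsl_adj_inl_inr.mp h1
          have h2 := cwsl_adj_inl_inr.mp h2
          have : ja = jb := by
            have := congrArg Fin.val (h1.symm.trans h2)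
            exact Fin.ext (by simpa using this)
          exact Subtype.ext (by rw [hja, hjb, this])
        · exact absurd (congrArg Subtype.val hb') (by simp [hjb])
      · exact absurd (congrArg Subtype.val ha') (by simp [hja])
    · rcases ha' with ha' | ha'
      · have := (hadj _ _).mp ha'
        rw [hja] at this
        exact absurd this cwsl_adj_inr_inr
      · rcases hb' with hb' | hb'
        · have := (hadj _ _).mp hb'
          rw [hjb] at this
          exact absurd this cwsl_adj_inr_inr
        · rw [ha', hb']
  have H5 : ∀ u ∈ C, C ⊆ N H u := by
    intro u hu
    obtain ⟨i, hi⟩ := (hmemC u).mp hu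
    intro x hx
    obtain ⟨k, hk⟩ := (hmemC x).mp hx
    rw [mem_N]
    by_cases h : i = k
    · exact Or.inr (Subtype.ext (by rw [hi, hk, h]))
    · refine Or.inl ((hadj _ _).mpr ?_)
      rw [hi, hk]
      exact cwsl_adj_inl_inl.mpr h
  -- cardinalities
  have hcardC : C.card = l + 1 := by
    have hinj : Function.Injective
        (fun i : Fin (l+1) => (⟨Sum.inl (Fin.castLE (by omega) i),
          (hmems _).mpr (by
            intro h
            have := congrArg Fin.val (Sum.inl_injective h)
            simp [Fin.val_last] at this
            omega)⟩ : ↥s)) := by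
      intro a b hab
      have := congrArg (fun x : ↥s => (x : Fin (l+2) ⊕ Fin l)) hab
      simp only at this
      have := congrArg Fin.val (Sum.inl_injective this)
      exact Fin.ext (by simpa using this)
    have himg : C = univ.image (fun i : Fin (l+1) => (⟨Sum.inl (Fin.castLE (by omega) i),
        (hmems _).mpr (by
          intro h
          have := congrArg Fin.val (Sum.inl_injective h)
          simp [Fin.val_last] at this
          omega)⟩ : ↥s)) := by
      ext x
      obtain ⟨x, hx⟩ := x
      rw [hmemC]
      simp only [Finset.mem_image, mem_univ, true_and]
      constructor
      · rintro ⟨i, rfl⟩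
        have hine : i ≠ Fin.last (l+1) := by
          intro h
          exact ((hmems _).mp hx) (by rw [h])
        have hival : (i : ℕ) < l + 1 := by
          have := i.isLt
          rcases Nat.lt_or_ge (i : ℕ) (l+1) with h | h
          · exact h
          · exact absurd (Fin.ext (by simp [Fin.val_last]; omega)) hine
        refine ⟨⟨(i : ℕ), hival⟩, Subtype.ext ?_⟩
        simp [Fin.ext_iff]
      · rintro ⟨i, hi⟩
        have := congrArg Subtype.val hi
        exact ⟨_, this.symm⟩
    rw [himg, Finset.card_image_of_injective _ hinj, card_univ, Fintype.card_fin]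
  have hcardV : Fintype.card ↥s = 2 * l + 1 := by
    have h1 : Fintype.card ↥s
        = Fintype.card {x : Fin (l+2) ⊕ Fin l // ¬ x = Sum.inl (Fin.last (l+1))} :=
      Fintype.card_congr (Equiv.subtypeEquivRight (fun x => by simp [hs]))
    rw [h1, Fintype.card_subtype_compl, Fintype.card_subtype_eq]
    simp [Fintype.card_sum]
    omega
  have := gammaG'_formula H C v0 hv0 H1 H5 (by rw [hcardC, hcardV]; omega)
  rw [this, hcardC, hcardV]
  omega

end Concrete3


/-- For `ℓ ≥ 1`, `G` the graph obtained from `K_{ℓ+2}` by attaching one pendant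
leaf to `ℓ` of its vertices, and `v` one of the two clique vertices without a
leaf, `γ_g'(G) = γ_g'(G−v) = ℓ + 1`. -/
theorem gameS_clique_with_some_leaves (l : ℕ) (hl : 1 ≤ l) :
    gammaG' (cliqueWithSomeLeaves l) = l + 1 ∧
    gammaG' ((cliqueWithSomeLeaves l).induce
      {(Sum.inl (Fin.last (l + 1)) : Fin (l + 2) ⊕ Fin l)}ᶜ) = l + 1 := by
  exact ⟨cwsl_part1 l hl, cwsl_part2 l hl⟩
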